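/- Let G=(V,E) be a graph with nonnegative vertex weights w and values α, let s be a knapsack capacity, let ε > 0, and let α_max = max_{u∈V} α(u). Define scaled values α'(u) = ⌊ n·α(u) / (ε·α_max) ⌋. Suppose W' ⊆ V maximizes Σ_{u∈W'} α'(u) among all connected vertex subsets of weight at most s, and W ⊆ V maximizes Σ_{u∈W} α(u) among all connected vertex subsets of weight at most s. Then Σ_{u∈W'} α(u) ≥ (1-ε)·Σ_{u∈W} α(u), provided α_max ≤ Σ_{u∈W} α(u). -/

import Mathlib

open SimpleGraph Finset

/-- Correctness of the scaling-and-rounding FPTAS for Connected Knapsack: if `W'` is an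
optimal connected solution for the scaled values `α'(u) = ⌊n α(u) / (ε α_max)⌋` and `W`
is an optimal connected solution for the original values `α`, and `α_max ≤ α(W)`, then
`α(W') ≥ (1 - ε) α(W)`. -/
theorem stmt12 {V : Type*} [Fintype V] [Nonempty V] (G : SimpleGraph V)
    (w α : V → ℝ) (hw : ∀ u, 0 ≤ w u) (hα : ∀ u, 0 ≤ α u)
    (s : ℝ) (ε : ℝ) (hε : 0 < ε)
    (αmax : ℝ) (hαmax : αmax = univ.sup' univ_nonempty α)
    (α' : V → ℤ)
    (hα' : ∀ u, α' u = ⌊(Fintype.card V : ℝ) * α u / (ε * αmax)⌋)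
    (Feasible : Finset V → Prop)
    (hFeas : ∀ U : Finset V, Feasible U ↔
      (G.induce (↑U : Set V)).Connected ∧ ∑ u ∈ U, w u ≤ s)
    (W' W : Finset V)
    (hW'opt : Feasible W' ∧ ∀ U, Feasible U → ∑ u ∈ U, α' u ≤ ∑ u ∈ W', α' u)
    (hWopt : Feasible W ∧ ∀ U, Feasible U → ∑ u ∈ U, α u ≤ ∑ u ∈ W, α u)
    (hOPT : αmax ≤ ∑ u ∈ W, α u) :
    (1 - ε) * ∑ u ∈ W, α u ≤ ∑ u ∈ W', α u := by
  set n : ℕ := Fintype.card V with hn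
  have hn1 : (1:ℝ) ≤ n := by exact_mod_cast Fintype.card_pos
  have hαmax_nonneg : 0 ≤ αmax := by
    obtain ⟨u⟩ := ‹Nonempty V›
    have := le_sup' α (mem_univ u)
    linarith [hα u, hαmax ▸ this]
  rcases eq_or_lt_of_le hαmax_nonneg with h0 | hpos
  · -- αmax = 0 ⇒ all α = 0
    have hall : ∀ u, α u = 0 := by
      intro u
      have h1 := le_sup' α (mem_univ u)
      have := hαmax ▸ h1
      linarith [hα u]
    simp [hall]
  · set c : ℝ := ε * αmax / n with hc
    have hcpos : 0 < c := by positivity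
    have hle : ∀ u, c * α' u ≤ α u := by
      intro u
      rw [hα' u]
      have h1 : (⌊(n : ℝ) * α u / (ε * αmax)⌋ : ℝ) ≤ (n : ℝ) * α u / (ε * αmax) :=
        Int.floor_le _
      have := mul_le_mul_of_nonneg_left h1 hcpos.le
      calc c * (⌊(n : ℝ) * α u / (ε * αmax)⌋ : ℝ) ≤ c * ((n : ℝ) * α u / (ε * αmax)) := this
        _ = α u := by rw [hc]; field_simp
    have hge : ∀ u, α u ≤ c * α' u + c := by
      intro u
      rw [hα' u]
      have h1 : (n : ℝ) * α u / (ε * αmax) < (⌊(n : ℝ) * α u / (ε * αmax)⌋ : ℝ) + 1 :=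
        Int.lt_floor_add_one _
      have h2 := mul_le_mul_of_nonneg_left h1.le hcpos.le
      have h3 : c * ((n : ℝ) * α u / (ε * αmax)) = α u := by rw [hc]; field_simp
      nlinarith
    have key := hW'opt.2 W hWopt.1
    have key' : c * (∑ u ∈ W, (α' u : ℝ)) ≤ c * ∑ u ∈ W', (α' u : ℝ) := by
      apply mul_le_mul_of_nonneg_left _ hcpos.le
      exact_mod_cast key
    have h1 : ∑ u ∈ W, α u ≤ c * (∑ u ∈ W, (α' u : ℝ)) + W.card * c := by
      simpa [Finset.sum_add_distrib, Finset.mul_sum] using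
        (Finset.sum_le_sum (fun u (_ : u ∈ W) => hge u))
    have h2 : c * (∑ u ∈ W', (α' u : ℝ)) ≤ ∑ u ∈ W', α u := by
      simpa [Finset.mul_sum] using Finset.sum_le_sum (fun u (_ : u ∈ W') => hle u)
    have hcard : (W.card : ℝ) ≤ n := by
      exact_mod_cast Finset.card_le_card (Finset.subset_univ W)
    have hnc : (W.card : ℝ) * c ≤ ε * αmax := by
      have : (n : ℝ) * c = ε * αmax := by rw [hc]; field_simp
      nlinarith
    nlinarith [mul_le_mul_of_nonneg_left hOPT hε.le]
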